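/- Let C be the chain complex over ℤ concentrated in degrees −1 and −2 with C_{−1} = free abelian group on {p^l : l ∈ ℤ} and C_{−2} = free abelian group on {q^l : l ∈ ℤ}, with boundary ∂p^l = q^l − q^{l−1} and ∂q^l = 0. Then H_{−1}(C) = 0 and H_{−2}(C) ≅ ℤ. -/

import Mathlib

/-- The boundary operator `∂ p^l = q^l − q^{l−1}` on the free abelian group
`ℤ →₀ ℤ` (generators `p^l`, `l ∈ ℤ`, mapped to combinations of `q^l`). -/
noncomputable def henonBoundary : (ℤ →₀ ℤ) →ₗ[ℤ] (ℤ →₀ ℤ) :=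
  Finsupp.lsum ℤ fun l => Finsupp.lsingle l - Finsupp.lsingle (l - 1)

lemma henonBoundary_single (l c : ℤ) :
    henonBoundary (Finsupp.single l c) = Finsupp.single l c - Finsupp.single (l - 1) c := by
  simp only [henonBoundary, Finsupp.lsum_single, LinearMap.sub_apply, Finsupp.lsingle_apply]

/-- Partial-sum functional `f ↦ ∑_{m ≤ n} f m`. -/
noncomputable def phi (n : ℤ) : (ℤ →₀ ℤ) →ₗ[ℤ] ℤ :=
  Finsupp.lsum ℤ fun l => if l ≤ n then LinearMap.id else 0

lemma phi_boundary (n : ℤ) :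
    (phi n).comp henonBoundary = - Finsupp.lapply (n + 1) := by
  apply Finsupp.lhom_ext
  intro l c
  simp only [LinearMap.comp_apply, henonBoundary_single, map_sub, LinearMap.neg_apply,
    Finsupp.lapply_apply, Finsupp.single_apply, phi, Finsupp.lsum_single]
  split_ifs with h1 h2 h3 h2 h3 h3 <;>
    simp only [LinearMap.id_apply, LinearMap.zero_apply] <;> omega

/-- Total-sum functional. -/
noncomputable def totalSum : (ℤ →₀ ℤ) →ₗ[ℤ] ℤ :=
  Finsupp.lsum ℤ fun _ => LinearMap.id

lemma totalSum_single (l c : ℤ) : totalSum (Finsupp.single l c) = c := by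
  simp only [totalSum, Finsupp.lsum_single, LinearMap.id_apply]

lemma hElem (l : ℤ) :
    Finsupp.single l (1:ℤ) - Finsupp.single 0 1 ∈ LinearMap.range henonBoundary := by
  induction l using Int.induction_on with
  | zero => simp
  | succ i ih =>
      have : Finsupp.single ((i:ℤ)+1) (1:ℤ) - Finsupp.single 0 1
          = (Finsupp.single (i:ℤ) 1 - Finsupp.single 0 1)
            + henonBoundary (Finsupp.single ((i:ℤ)+1) 1) := by
        rw [henonBoundary_single]
        have : ((i:ℤ) + 1 - 1) = (i:ℤ) := by ring
        rw [this]
        abel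
      rw [this]
      exact Submodule.add_mem _ ih (LinearMap.mem_range_self _ _)
  | pred i ih =>
      have : Finsupp.single (-(i:ℤ)-1) (1:ℤ) - Finsupp.single 0 1
          = (Finsupp.single (-(i:ℤ)) 1 - Finsupp.single 0 1)
            - henonBoundary (Finsupp.single (-(i:ℤ)) 1) := by
        rw [henonBoundary_single]
        abel
      rw [this]
      exact Submodule.sub_mem _ ih (LinearMap.mem_range_self _ _)

lemma range_eq : LinearMap.range henonBoundary = LinearMap.ker totalSum := by
  apply le_antisymm
  · rintro _ ⟨f, rfl⟩
    have h : totalSum.comp henonBoundary = 0 := by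
      apply Finsupp.lhom_ext
      intro l c
      simp only [LinearMap.comp_apply, henonBoundary_single, map_sub, totalSum_single,
        sub_self, LinearMap.zero_apply]
    have := LinearMap.congr_fun h f
    simpa using this
  · intro f hf
    have hf' : totalSum f = 0 := hf
    have htot : totalSum f = f.sum fun _ c => c := rfl
    have hrepr : f = f.sum fun l c => c • (Finsupp.single l (1:ℤ) - Finsupp.single 0 1) := by
      simp only [smul_sub]
      rw [Finsupp.sum_sub]
      have h1 : (f.sum fun l c => c • Finsupp.single l (1:ℤ)) = f := by
        simp only [Finsupp.smul_single', mul_one, Finsupp.sum_single]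
      simp only [h1]
      symm
      rw [sub_eq_self, Finsupp.sum, ← Finset.sum_smul]
      have h3 : (∑ l ∈ f.support, f l) = 0 := by
        have h4 : f.sum (fun _ c => c) = 0 := by rw [← htot]; exact hf'
        exact h4
      rw [h3, zero_smul]
    rw [hrepr]
    exact Submodule.sum_mem _ fun l _ => Submodule.smul_mem _ _ (hElem l)

/-- for the complex `C_{−1} = ℤ⟨p^l : l ∈ ℤ⟩`, `C_{−2} = ℤ⟨q^l : l ∈ ℤ⟩`
with `∂ p^l = q^l − q^{l−1}` and `∂ q^l = 0`, one has `H_{−1} = ker ∂ = 0` and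
`H_{−2} = C_{−2}/Im ∂ ≅ ℤ`. -/
theorem stmt4 :
    LinearMap.ker henonBoundary = ⊥ ∧
    Nonempty (((ℤ →₀ ℤ) ⧸ LinearMap.range henonBoundary) ≃ₗ[ℤ] ℤ) := by
  constructor
  · ext f
    simp only [LinearMap.mem_ker, Submodule.mem_bot]
    constructor
    · intro hf
      ext m
      have := LinearMap.congr_fun (phi_boundary (m - 1)) f
      simp only [LinearMap.comp_apply, hf, map_zero, LinearMap.neg_apply,
        Finsupp.lapply_apply] at this
      have h2 : f (m - 1 + 1) = 0 := by omega
      have hm : m - 1 + 1 = m := by ring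
      rw [hm] at h2
      simpa using h2
    · rintro rfl; simp
  · have hsurj : Function.Surjective totalSum := fun c =>
      ⟨Finsupp.single 0 c, totalSum_single 0 c⟩
    exact ⟨(Submodule.quotEquivOfEq _ _ range_eq).trans
      (totalSum.quotKerEquivOfSurjective hsurj)⟩
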